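/- Let A_1, ..., A_n be independent random variables with values in a measurable space X, and let f : X^n → ℝ be a bounded measurable function satisfying the bounded differences condition: for every index i and all values a_1,...,a_n and a_i' in X, |f(a_1,...,a_n) − f(a_1,...,a_{i−1}, a_i', a_{i+1},...,a_n)| ≤ c. Then Var[f(A_1,...,A_n)] ≤ (1/4) n c². -/

import Mathlib

open MeasureTheory ProbabilityTheory

section EfronSteinAux

variable {α β : Type*} [MeasurableSpace α] [MeasurableSpace β]

private lemma integrable_of_bdd' (μ : Measure α) [IsFiniteMeasure μ] {g : α → ℝ}
    (hg : AEStronglyMeasurable g μ) {M : ℝ} (hM : ∀ x, |g x| ≤ M) : Integrable g μ :=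
  ⟨hg, HasFiniteIntegral.of_bounded (C := M)
    (ae_of_all _ fun x => by simpa [Real.norm_eq_abs] using hM x)⟩

private lemma abs_integral_le' (μ : Measure β) [IsProbabilityMeasure μ] {g : β → ℝ} {M : ℝ}
    (hM : ∀ x, |g x| ≤ M) : |∫ x, g x ∂μ| ≤ M := by
  have := norm_integral_le_of_norm_le_const (μ := μ) (f := g) (C := M)
    (ae_of_all _ fun x => by simpa [Real.norm_eq_abs] using hM x)
  simpa [Real.norm_eq_abs] using this

private lemma variance_eq_sub' (μ : Measure α) [IsProbabilityMeasure μ] {g : α → ℝ}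
    (hg : Measurable g) {M : ℝ} (hM : ∀ x, |g x| ≤ M) :
    variance g μ = ∫ x, g x ^ 2 ∂μ - (∫ x, g x ∂μ) ^ 2 := by
  have h2 : MemLp g 2 μ :=
    MemLp.of_bound hg.aestronglyMeasurable M (ae_of_all _ fun x => by
      simpa [Real.norm_eq_abs] using hM x)
  rw [variance_eq_sub h2]
  rfl

private lemma total_variance_prod (κ : Measure α) (ν : Measure β)
    [IsProbabilityMeasure κ] [IsProbabilityMeasure ν]
    {F : α × β → ℝ} (hF : Measurable F) {M : ℝ} (hM : ∀ z, |F z| ≤ M) :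
    (∫ z, F z ^ 2 ∂(κ.prod ν)) - (∫ z, F z ∂(κ.prod ν)) ^ 2
      = (∫ a, ((∫ y, F (a, y) ^ 2 ∂ν) - (∫ y, F (a, y) ∂ν) ^ 2) ∂κ)
        + ((∫ a, (∫ y, F (a, y) ∂ν) ^ 2 ∂κ) - (∫ a, ∫ y, F (a, y) ∂ν ∂κ) ^ 2) := by
  have hMsq : ∀ z, |F z ^ 2| ≤ M ^ 2 := fun z => by
    rw [abs_pow]; exact pow_le_pow_left₀ (abs_nonneg _) (hM z) 2
  have hFint : Integrable F (κ.prod ν) := integrable_of_bdd' _ hF.aestronglyMeasurable hM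
  have hF2int : Integrable (fun z => F z ^ 2) (κ.prod ν) :=
    integrable_of_bdd' _ (hF.pow_const 2).aestronglyMeasurable hMsq
  have h1m : StronglyMeasurable fun a => ∫ y, F (a, y) ^ 2 ∂ν :=
    ((hF.pow_const 2).stronglyMeasurable).integral_prod_right'
  have hgm : StronglyMeasurable fun a => ∫ y, F (a, y) ∂ν :=
    hF.stronglyMeasurable.integral_prod_right'
  have h1 : Integrable (fun a => ∫ y, F (a, y) ^ 2 ∂ν) κ :=
    integrable_of_bdd' _ h1m.aestronglyMeasurable
      (fun a => abs_integral_le' ν (fun y => hMsq (a, y)))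
  have hgb : ∀ a, |∫ y, F (a, y) ∂ν| ≤ M := fun a => abs_integral_le' ν (fun y => hM (a, y))
  have h2 : Integrable (fun a => (∫ y, F (a, y) ∂ν) ^ 2) κ :=
    integrable_of_bdd' _ (hgm.measurable.pow_const 2).aestronglyMeasurable
      (fun a => by rw [abs_pow]; exact pow_le_pow_left₀ (abs_nonneg _) (hgb a) 2)
  rw [integral_prod _ hFint, integral_prod _ hF2int, integral_sub h1 h2]
  ring

/-- Efron–Stein type bound for the product measure. -/
private lemma efron_stein_pi {X : Type*} [MeasurableSpace X] :
    ∀ (n : ℕ) (μ : Fin n → Measure X), (∀ i, IsProbabilityMeasure (μ i)) →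
    ∀ (f : (Fin n → X) → ℝ), Measurable f → ∀ (M : ℝ), (∀ x, |f x| ≤ M) → ∀ (c : ℝ),
    (∀ (i : Fin n) (x : Fin n → X) (a' : X), |f x - f (Function.update x i a')| ≤ c) →
    variance f (Measure.pi μ) ≤ (1 / 4 : ℝ) * n * c ^ 2 := by
  intro n
  induction n with
  | zero =>
    intro μ hμ f hf M hM c hdiff
    haveI : ∀ i, IsProbabilityMeasure (μ i) := hμ
    have hconst : f = fun _ => f (fun i => i.elim0) :=
      funext fun x => congrArg f (Subsingleton.elim _ _)
    rw [variance_eq_sub' _ hf hM]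
    rw [hconst]
    simp
  | succ n ih =>
    intro μ hμ f hf M hM c hdiff
    haveI : ∀ i, IsProbabilityMeasure (μ i) := hμ
    set κ := μ 0 with hκ
    set ν := Measure.pi (fun j : Fin n => μ ((0 : Fin (n+1)).succAbove j)) with hν
    haveI : IsProbabilityMeasure ν := by infer_instance
    set e := MeasurableEquiv.piFinSuccAbove (fun _ : Fin (n+1) => X) 0 with he
    have hmp : MeasurePreserving e (Measure.pi μ) (κ.prod ν) :=
      measurePreserving_piFinSuccAbove μ 0
    set F : X × (Fin n → X) → ℝ := fun p => f (Fin.cons p.1 p.2) with hF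
    have hconsm : Measurable fun p : X × (Fin n → X) => (Fin.cons p.1 p.2 : Fin (n+1) → X) := by
      refine measurable_pi_iff.2 fun j => ?_
      refine Fin.cases ?_ (fun k => ?_) j
      · simpa using measurable_fst
      · simp only [Fin.cons_succ]; exact (measurable_pi_apply k).comp measurable_snd
    have hFmeas : Measurable F := hf.comp hconsm
    have hMF : ∀ z, |F z| ≤ M := fun z => hM _
    -- the composition identity
    have hcomp : ∀ x : Fin (n+1) → X, F (e x) = f x := by
      intro x
      show f (Fin.cons (x 0) (fun j => x ((0 : Fin (n+1)).succAbove j))) = f x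
      congr 1
      simp [Fin.succAbove_zero]
      exact Fin.cons_self_tail x
    -- transfer variance to the product measure
    have hint1 : ∫ z, F z ∂(κ.prod ν) = ∫ x, f x ∂(Measure.pi μ) := by
      rw [← hmp.map_eq, integral_map e.measurable.aemeasurable hFmeas.aestronglyMeasurable]
      exact integral_congr_ae (ae_of_all _ fun x => hcomp x)
    have hint2 : ∫ z, F z ^ 2 ∂(κ.prod ν) = ∫ x, f x ^ 2 ∂(Measure.pi μ) := by
      rw [← hmp.map_eq, integral_map e.measurable.aemeasurable
        (hFmeas.pow_const 2).aestronglyMeasurable]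
      refine integral_congr_ae (ae_of_all _ fun x => ?_)
      show F (e x) ^ 2 = f x ^ 2
      rw [hcomp x]
    have hvar : variance f (Measure.pi μ)
        = (∫ z, F z ^ 2 ∂(κ.prod ν)) - (∫ z, F z ∂(κ.prod ν)) ^ 2 := by
      rw [variance_eq_sub' _ hf hM, hint1, hint2]
    rw [hvar, total_variance_prod κ ν hFmeas hMF]
    -- bound the first term
    have hterm1 : ∀ a : X,
        (∫ y, F (a, y) ^ 2 ∂ν) - (∫ y, F (a, y) ∂ν) ^ 2 ≤ (1 / 4 : ℝ) * n * c ^ 2 := by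
      intro a
      have hmeasa : Measurable fun y : Fin n → X => F (a, y) :=
        hFmeas.comp (measurable_const.prodMk measurable_id)
      have hbd : ∀ y, |F (a, y)| ≤ M := fun y => hM _
      rw [← variance_eq_sub' ν hmeasa hbd]
      refine ih _ (fun j => hμ _) _ hmeasa M hbd c ?_
      intro j y b
      have : Fin.cons a (Function.update y j b)
          = Function.update (Fin.cons a y : Fin (n+1) → X) j.succ b := by
        simp [Fin.cons_update]
      simpa [F, this] using hdiff j.succ (Fin.cons a y) b
    -- bound the second term : the conditional expectation has bounded range
    set g : X → ℝ := fun a => ∫ y, F (a, y) ∂ν with hg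
    have hgm : StronglyMeasurable g := hFmeas.stronglyMeasurable.integral_prod_right'
    have hgb : ∀ a, |g a| ≤ M := fun a => abs_integral_le' ν (fun y => hM _)
    have hgdiff : ∀ a a', g a - g a' ≤ c := by
      intro a a'
      have hint : ∀ b : X, Integrable (fun y => F (b, y)) ν := fun b =>
        integrable_of_bdd' _ (hFmeas.comp
          (measurable_const.prodMk measurable_id)).aestronglyMeasurable (fun y => hM _)
      have : g a - g a' = ∫ y, (F (a, y) - F (a', y)) ∂ν := (integral_sub (hint a) (hint a')).symm
      rw [this]
      have hb : ∀ y, |F (a, y) - F (a', y)| ≤ c := by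
        intro y
        have : Function.update (Fin.cons a y : Fin (n+1) → X) 0 a' = Fin.cons a' y :=
          Fin.update_cons_zero ..
        simpa [F, this] using hdiff 0 (Fin.cons a y) a'
      exact le_trans (le_abs_self _) (abs_integral_le' ν hb)
    have hX : Nonempty X := by
      by_contra h
      rw [not_nonempty_iff] at h
      have h1 := measure_univ (μ := κ)
      rw [Set.univ_eq_empty_iff.2 h, measure_empty] at h1
      exact zero_ne_one h1
    have hbddBelow : BddBelow (Set.range g) := ⟨-M, fun r ⟨a, ha⟩ => ha ▸ (abs_le.1 (hgb a)).1⟩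
    set a₀ := sInf (Set.range g) with ha₀
    have hlb : ∀ a, a₀ ≤ g a := fun a => csInf_le hbddBelow ⟨a, rfl⟩
    have hub : ∀ a, g a ≤ a₀ + c := by
      intro a
      have : g a - c ≤ a₀ := le_csInf (Set.range_nonempty g) (fun r ⟨b, hb⟩ => by
        have := hgdiff a b; linarith [hb ▸ this])
      linarith
    have hterm2 : (∫ a, (g a) ^ 2 ∂κ) - (∫ a, g a ∂κ) ^ 2 ≤ (1 / 4 : ℝ) * c ^ 2 := by
      rw [← variance_eq_sub' κ hgm.measurable hgb]
      have := variance_le_sq_of_bounded (μ := κ) (a := a₀) (b := a₀ + c) (X := g)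
        (ae_of_all _ fun a => ⟨hlb a, hub a⟩) hgm.measurable.aemeasurable
      calc variance g κ ≤ ((a₀ + c - a₀) / 2) ^ 2 := this
        _ = (1 / 4 : ℝ) * c ^ 2 := by ring
    -- put the two bounds together
    have hintgr : ∫ a, ((∫ y, F (a, y) ^ 2 ∂ν) - (∫ y, F (a, y) ∂ν) ^ 2) ∂κ
        ≤ (1 / 4 : ℝ) * n * c ^ 2 := by
      have hMsq : ∀ z, |F z ^ 2| ≤ M ^ 2 := fun z => by
        rw [abs_pow]; exact pow_le_pow_left₀ (abs_nonneg _) (hMF z) 2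
      have h1m : StronglyMeasurable fun a => ∫ y, F (a, y) ^ 2 ∂ν :=
        ((hFmeas.pow_const 2).stronglyMeasurable).integral_prod_right'
      have h1 : Integrable (fun a => ∫ y, F (a, y) ^ 2 ∂ν) κ :=
        integrable_of_bdd' _ h1m.aestronglyMeasurable
          (fun a => abs_integral_le' ν (fun y => hMsq (a, y)))
      have h2 : Integrable (fun a => (∫ y, F (a, y) ∂ν) ^ 2) κ :=
        integrable_of_bdd' _ (hgm.measurable.pow_const 2).aestronglyMeasurable
          (fun a => by rw [abs_pow]; exact pow_le_pow_left₀ (abs_nonneg _) (hgb a) 2)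
      calc ∫ a, ((∫ y, F (a, y) ^ 2 ∂ν) - (∫ y, F (a, y) ∂ν) ^ 2) ∂κ
          ≤ ∫ _, (1 / 4 : ℝ) * n * c ^ 2 ∂κ :=
            integral_mono (h1.sub h2) (integrable_const _) hterm1
        _ = (1 / 4 : ℝ) * n * c ^ 2 := by simp
    have := add_le_add hintgr hterm2
    calc (∫ a, ((∫ y, F (a, y) ^ 2 ∂ν) - (∫ y, F (a, y) ∂ν) ^ 2) ∂κ)
          + ((∫ a, (∫ y, F (a, y) ∂ν) ^ 2 ∂κ) - (∫ a, ∫ y, F (a, y) ∂ν ∂κ) ^ 2)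
        ≤ (1 / 4 : ℝ) * n * c ^ 2 + (1 / 4 : ℝ) * c ^ 2 := this
      _ = (1 / 4 : ℝ) * (n + 1 : ℕ) * c ^ 2 := by push_cast; ring

end EfronSteinAux

theorem bounded_differences_variance
    {Ω X : Type*} [MeasureSpace Ω] [IsProbabilityMeasure (ℙ : Measure Ω)]
    [MeasurableSpace X] {n : ℕ} (A : Fin n → Ω → X)
    (hmeas : ∀ i, Measurable (A i))
    (hindep : iIndepFun A ℙ)
    (f : (Fin n → X) → ℝ) (hf : Measurable f)
    (hbdd : ∃ M : ℝ, ∀ x, |f x| ≤ M)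
    (c : ℝ)
    (hdiff : ∀ (i : Fin n) (x : Fin n → X) (a' : X),
      |f x - f (Function.update x i a')| ≤ c) :
    variance (fun ω => f (fun i => A i ω)) ℙ ≤ (1 / 4 : ℝ) * n * c ^ 2 := by
  obtain ⟨M, hM⟩ := hbdd
  set μ : Fin n → Measure X := fun i => Measure.map (A i) ℙ with hμ
  haveI : ∀ i, IsProbabilityMeasure (μ i) := fun i =>
    Measure.isProbabilityMeasure_map (hmeas i).aemeasurable
  have hvecm : Measurable fun ω (i : Fin n) => A i ω :=
    measurable_pi_iff.2 hmeas
  have hmap : Measure.map (fun ω (i : Fin n) => A i ω) ℙ = Measure.pi μ := by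
    refine (Measure.pi_eq fun s hs => ?_).symm
    rw [Measure.map_apply hvecm (MeasurableSet.univ_pi hs)]
    have hpre : (fun ω (i : Fin n) => A i ω) ⁻¹' Set.pi Set.univ s
        = ⋂ i ∈ Finset.univ, A i ⁻¹' s i := by
      ext ω
      simp [Set.mem_pi]
    rw [hpre, hindep.measure_inter_preimage_eq_mul Finset.univ (fun i _ => hs i)]
    exact Finset.prod_congr rfl fun i _ => (Measure.map_apply (hmeas i) (hs i)).symm
  have hMc : ∀ ω, |f (fun i => A i ω)| ≤ M := fun ω => hM _
  rw [show (fun ω => f (fun i => A i ω)) = f ∘ (fun ω (i : Fin n) => A i ω) from rfl,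
    variance_eq_sub' ℙ (hf.comp hvecm) hMc]
  have h1 : ∫ ω, f (fun i => A i ω) ∂ℙ = ∫ x, f x ∂(Measure.pi μ) := by
    rw [← hmap, integral_map hvecm.aemeasurable hf.aestronglyMeasurable]
  have h2 : ∫ ω, f (fun i => A i ω) ^ 2 ∂ℙ = ∫ x, f x ^ 2 ∂(Measure.pi μ) := by
    rw [← hmap, integral_map hvecm.aemeasurable (hf.pow_const 2).aestronglyMeasurable]
  simp only [Function.comp]
  rw [h1, h2, ← variance_eq_sub' (Measure.pi μ) hf hM]
  exact efron_stein_pi n μ (fun i => inferInstance) f hf M hM c hdiff
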